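/- In the limit ν_1 → −∞ and ν_2 → +∞, the net work of the Stirling cycle W_cyc = (1/β_H) ln[p_F(β_H,ν_1)/p_F(β_H,ν_2)] + (1/β_C) ln[p_F(β_C,ν_2)/p_F(β_C,ν_1)] converges to (1/β_H − 1/β_C) h(d,N). -/

import Mathlib

open Real Filter

private lemma g_atBot : Tendsto (fun x : ℝ => Real.log (1 + Real.exp x)) atBot (nhds 0) := by
  have h1 : Tendsto (fun x : ℝ => 1 + Real.exp x) atBot (nhds 1) := by
    simpa using tendsto_const_nhds.add Real.tendsto_exp_atBot
  have := (Real.continuousAt_log (by norm_num : (1:ℝ) ≠ 0)).tendsto.comp h1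
  simpa [Function.comp_def] using this

private lemma g_sub_atTop :
    Tendsto (fun x : ℝ => Real.log (1 + Real.exp x) - x) atTop (nhds 0) := by
  have key : ∀ x : ℝ, Real.log (1 + Real.exp x) - x = Real.log (1 + Real.exp (-x)) := by
    intro x
    have h1 : (1:ℝ) + Real.exp x = Real.exp x * (1 + Real.exp (-x)) := by
      rw [mul_add, mul_one, ← Real.exp_add]
      simp [add_comm]
    rw [h1, Real.log_mul (Real.exp_ne_zero x) (by positivity), Real.log_exp]
    ring
  simp only [key]
  exact g_atBot.comp tendsto_neg_atTop_atBot

private lemma log_ratio (x y : ℝ) :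
    Real.log ((1 / (1 + Real.exp x)) / (1 / (1 + Real.exp y))) =
      Real.log (1 + Real.exp y) - Real.log (1 + Real.exp x) := by
  have hx : (0:ℝ) < 1 + Real.exp x := by positivity
  have hy : (0:ℝ) < 1 + Real.exp y := by positivity
  rw [one_div, one_div, Real.log_div (by positivity) (by positivity),
    Real.log_inv, Real.log_inv]
  ring

theorem stirling_cycle_work_limit (βH βC hbarω : ℝ) (hβH : 0 < βH) (hβC : 0 < βC)
    (hhbarω : 0 < hbarω) (d N : ℕ) (hN : 1 ≤ N) (hd : N ≤ d) :
    Filter.Tendsto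
      (fun p : ℝ × ℝ =>
        (1 / βH) * Real.log
            ((1 / (1 + Real.exp ((N : ℝ) * ((N : ℝ) - 1) * βH * hbarω / 2 - βH * p.1
                - (Real.log (Nat.choose (d + N - 1) N : ℝ)
                    - Real.log (Nat.choose d N : ℝ))))) /
              (1 / (1 + Real.exp ((N : ℝ) * ((N : ℝ) - 1) * βH * hbarω / 2 - βH * p.2
                - (Real.log (Nat.choose (d + N - 1) N : ℝ)
                    - Real.log (Nat.choose d N : ℝ))))))
          + (1 / βC) * Real.log
            ((1 / (1 + Real.exp ((N : ℝ) * ((N : ℝ) - 1) * βC * hbarω / 2 - βC * p.2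
                - (Real.log (Nat.choose (d + N - 1) N : ℝ)
                    - Real.log (Nat.choose d N : ℝ))))) /
              (1 / (1 + Real.exp ((N : ℝ) * ((N : ℝ) - 1) * βC * hbarω / 2 - βC * p.1
                - (Real.log (Nat.choose (d + N - 1) N : ℝ)
                    - Real.log (Nat.choose d N : ℝ)))))))
      (Filter.atBot ×ˢ Filter.atTop)
      (nhds ((1 / βH - 1 / βC) *
        (Real.log (Nat.choose (d + N - 1) N : ℝ)
          - Real.log (Nat.choose d N : ℝ)))) := by
  set h : ℝ := Real.log (Nat.choose (d + N - 1) N : ℝ) - Real.log (Nat.choose d N : ℝ) with hh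
  set E : ℝ → ℝ → ℝ := fun β ν => (N : ℝ) * ((N : ℝ) - 1) * β * hbarω / 2 - β * ν - h with hE
  set g : ℝ → ℝ := fun x => Real.log (1 + Real.exp x) with hg
  -- limits of arguments
  have hE1H : Tendsto (fun p : ℝ × ℝ => E βH p.1) (atBot ×ˢ atTop) atTop := by
    have : Tendsto (fun p : ℝ × ℝ => βH * p.1) (atBot ×ˢ atTop) atBot :=
      (tendsto_fst.const_mul_atBot hβH)
    have h2 : Tendsto (fun p : ℝ × ℝ => -(βH * p.1)) (atBot ×ˢ atTop) atTop :=
      tendsto_neg_atBot_atTop.comp this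
    have := tendsto_atTop_add_const_left _ ((N : ℝ) * ((N : ℝ) - 1) * βH * hbarω / 2) h2
    have := tendsto_atTop_add_const_right _ (-h) this
    refine this.congr fun p => by simp [hE]; ring
  have hE1C : Tendsto (fun p : ℝ × ℝ => E βC p.1) (atBot ×ˢ atTop) atTop := by
    have : Tendsto (fun p : ℝ × ℝ => βC * p.1) (atBot ×ˢ atTop) atBot :=
      (tendsto_fst.const_mul_atBot hβC)
    have h2 : Tendsto (fun p : ℝ × ℝ => -(βC * p.1)) (atBot ×ˢ atTop) atTop :=
      tendsto_neg_atBot_atTop.comp this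
    have := tendsto_atTop_add_const_left _ ((N : ℝ) * ((N : ℝ) - 1) * βC * hbarω / 2) h2
    have := tendsto_atTop_add_const_right _ (-h) this
    refine this.congr fun p => by simp [hE]; ring
  have hE2H : Tendsto (fun p : ℝ × ℝ => E βH p.2) (atBot ×ˢ atTop) atBot := by
    have : Tendsto (fun p : ℝ × ℝ => βH * p.2) (atBot ×ˢ atTop) atTop :=
      (tendsto_snd.const_mul_atTop hβH)
    have h2 : Tendsto (fun p : ℝ × ℝ => -(βH * p.2)) (atBot ×ˢ atTop) atBot :=
      tendsto_neg_atTop_atBot.comp this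
    have := tendsto_atBot_add_const_left _ ((N : ℝ) * ((N : ℝ) - 1) * βH * hbarω / 2) h2
    have := tendsto_atBot_add_const_right _ (-h) this
    refine this.congr fun p => by simp [hE]; ring
  have hE2C : Tendsto (fun p : ℝ × ℝ => E βC p.2) (atBot ×ˢ atTop) atBot := by
    have : Tendsto (fun p : ℝ × ℝ => βC * p.2) (atBot ×ˢ atTop) atTop :=
      (tendsto_snd.const_mul_atTop hβC)
    have h2 : Tendsto (fun p : ℝ × ℝ => -(βC * p.2)) (atBot ×ˢ atTop) atBot :=
      tendsto_neg_atTop_atBot.comp this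
    have := tendsto_atBot_add_const_left _ ((N : ℝ) * ((N : ℝ) - 1) * βC * hbarω / 2) h2
    have := tendsto_atBot_add_const_right _ (-h) this
    refine this.congr fun p => by simp [hE]; ring
  -- limits of the pieces
  have t1 : Tendsto (fun p : ℝ × ℝ => g (E βH p.2)) (atBot ×ˢ atTop) (nhds 0) :=
    g_atBot.comp hE2H
  have t2 : Tendsto (fun p : ℝ × ℝ => g (E βH p.1) - E βH p.1) (atBot ×ˢ atTop) (nhds 0) :=
    g_sub_atTop.comp hE1H
  have t3 : Tendsto (fun p : ℝ × ℝ => g (E βC p.1) - E βC p.1) (atBot ×ˢ atTop) (nhds 0) :=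
    g_sub_atTop.comp hE1C
  have t4 : Tendsto (fun p : ℝ × ℝ => g (E βC p.2)) (atBot ×ˢ atTop) (nhds 0) :=
    g_atBot.comp hE2C
  have hG : Tendsto (fun p : ℝ × ℝ =>
      (1 / βH) * g (E βH p.2) - (1 / βH) * (g (E βH p.1) - E βH p.1)
        + (1 / βC) * (g (E βC p.1) - E βC p.1) - (1 / βC) * g (E βC p.2)
        + (1 / βH - 1 / βC) * h) (atBot ×ˢ atTop)
      (nhds ((1 / βH - 1 / βC) * h)) := by
    have := ((((t1.const_mul (1 / βH)).sub (t2.const_mul (1 / βH))).add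
      (t3.const_mul (1 / βC))).sub (t4.const_mul (1 / βC))).add
      (tendsto_const_nhds (x := (1 / βH - 1 / βC) * h))
    simpa using this
  refine hG.congr fun p => ?_
  have e1 : Real.log ((1 / (1 + Real.exp (E βH p.1))) / (1 / (1 + Real.exp (E βH p.2)))) =
      g (E βH p.2) - g (E βH p.1) := log_ratio _ _
  have e2 : Real.log ((1 / (1 + Real.exp (E βC p.2))) / (1 / (1 + Real.exp (E βC p.1)))) =
      g (E βC p.1) - g (E βC p.2) := log_ratio _ _
  have harg : ∀ β ν : ℝ, (N : ℝ) * ((N : ℝ) - 1) * β * hbarω / 2 - β * ν - h = E β ν := by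
    intro β ν; simp [hE]
  rw [show ((N : ℝ) * ((N : ℝ) - 1) * βH * hbarω / 2 - βH * p.1 - h) = E βH p.1 from harg _ _,
    show ((N : ℝ) * ((N : ℝ) - 1) * βH * hbarω / 2 - βH * p.2 - h) = E βH p.2 from harg _ _,
    show ((N : ℝ) * ((N : ℝ) - 1) * βC * hbarω / 2 - βC * p.1 - h) = E βC p.1 from harg _ _,
    show ((N : ℝ) * ((N : ℝ) - 1) * βC * hbarω / 2 - βC * p.2 - h) = E βC p.2 from harg _ _]
  rw [e1, e2]
  have hEexp : ∀ β ν : ℝ, E β ν = (N : ℝ) * ((N : ℝ) - 1) * β * hbarω / 2 - β * ν - h :=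
    fun β ν => rfl
  rw [hEexp βH p.1, hEexp βC p.1]
  field_simp
  ring
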